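/- arXiv:0803.0297 — 6 statements merged into one kernel-verified Lean document; each statement's English description precedes it below -/
import Mathlib

section
/- Modulo the subgroup 2πi·log Q* of C, one has Li₂(1/3) + Li₂(−1/2) + (1/2)(log(3/2))² = 0, where Li₂ is the dilogarithm defined by analytic continuation of the series ∑ zⁿ/n². -/
open Complex

/-- The dilogarithm, defined by the series `∑ zⁿ/n²` (convergent for `|z| < 1`,
and extended by analytic continuation in general; for the arguments `1/3` and `-1/2`
used below the series converges). -/
noncomputable def dilog (z : ℂ) : ℂ := ∑' n : ℕ, z ^ n / (n : ℂ) ^ 2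

lemma aux_summable {z : ℂ} (hz : ‖z‖ < 1) :
    Summable (fun n : ℕ => z ^ (n + 1) / ((n : ℂ) + 1) ^ 2) := by
  refine Summable.of_norm_bounded
    (summable_geometric_of_lt_one (norm_nonneg z) hz) fun n => ?_
  have hn : (1 : ℝ) ≤ ‖((n : ℂ) + 1)‖ := by
    have : ((n : ℂ) + 1) = ((n + 1 : ℕ) : ℂ) := by push_cast; ring
    rw [this, Complex.norm_natCast]
    exact_mod_cast Nat.succ_le_succ (Nat.zero_le n)
  rw [norm_div, norm_pow, norm_pow]
  calc ‖z‖ ^ (n + 1) / ‖(n : ℂ) + 1‖ ^ 2 ≤ ‖z‖ ^ (n + 1) / 1 := by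
        gcongr
        all_goals first | positivity | nlinarith
    _ = ‖z‖ ^ n * ‖z‖ := by rw [div_one, pow_succ]
    _ ≤ ‖z‖ ^ n * 1 := mul_le_mul_of_nonneg_left hz.le (pow_nonneg (norm_nonneg z) n)
    _ = ‖z‖ ^ n := mul_one _

lemma dilog_eq {z : ℂ} (hz : ‖z‖ < 1) :
    dilog z = ∑' n : ℕ, z ^ (n + 1) / ((n : ℂ) + 1) ^ 2 := by
  have hs : Summable (fun n : ℕ => z ^ n / (n : ℂ) ^ 2) := by
    rw [← summable_nat_add_iff 1]
    refine (aux_summable hz).congr fun n => ?_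
    push_cast; ring_nf
  rw [dilog, hs.tsum_eq_zero_add]
  simp only [pow_zero, Nat.cast_zero]
  rw [show ((0:ℂ)^2) = 0 by ring, div_zero, zero_add]
  congr 1; ext n; push_cast; ring_nf

lemma dilog_zero : dilog 0 = 0 := by
  have : ∀ n : ℕ, (0 : ℂ) ^ n / (n : ℂ) ^ 2 = 0 := by
    intro n
    rcases n with _ | n
    · norm_num
    · simp
  simp only [dilog]
  rw [tsum_congr this, tsum_zero]

lemma aux_summable' {z : ℂ} (hz : ‖z‖ < 1) :
    Summable (fun n : ℕ => z ^ n / ((n : ℂ) + 1)) := by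
  refine Summable.of_norm_bounded
    (summable_geometric_of_lt_one (norm_nonneg z) hz) fun n => ?_
  have hn : (1 : ℝ) ≤ ‖((n : ℂ) + 1)‖ := by
    have : ((n : ℂ) + 1) = ((n + 1 : ℕ) : ℂ) := by push_cast; ring
    rw [this, Complex.norm_natCast]
    exact_mod_cast Nat.succ_le_succ (Nat.zero_le n)
  rw [norm_div, norm_pow]
  calc ‖z‖ ^ n / ‖(n : ℂ) + 1‖ ≤ ‖z‖ ^ n / 1 := by
        gcongr
        all_goals first | positivity | nlinarith
    _ = ‖z‖ ^ n := div_one _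

lemma hasDerivAt_dilog {z : ℂ} (hz : ‖z‖ < 9/10) :
    HasDerivAt dilog (∑' n : ℕ, z ^ n / ((n : ℂ) + 1)) z := by
  have H : HasDerivAt (fun w : ℂ => ∑' n : ℕ, w ^ (n + 1) / ((n : ℂ) + 1) ^ 2)
      (∑' n : ℕ, z ^ n / ((n : ℂ) + 1)) z := by
    refine hasDerivAt_tsum_of_isPreconnected
      (u := fun n : ℕ => (9/10 : ℝ) ^ n)
      (g := fun (n : ℕ) (w : ℂ) => w ^ (n + 1) / ((n : ℂ) + 1) ^ 2)
      (g' := fun (n : ℕ) (w : ℂ) => w ^ n / ((n : ℂ) + 1))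
      (t := Metric.ball (0 : ℂ) (9/10)) (y₀ := 0)
      (summable_geometric_of_lt_one (by norm_num) (by norm_num))
      Metric.isOpen_ball ((convex_ball (0:ℂ) _).isPreconnected)
      (fun n y _ => ?_) (fun n y hy => ?_) (by simpa using (by norm_num : (0:ℝ) < 9/10))
      ?_ (by simpa using hz)
    · have h1 : HasDerivAt (fun w : ℂ => w ^ (n + 1)) (((n : ℂ) + 1) * y ^ n) y := by
        simpa using hasDerivAt_pow (n + 1) y
      have := h1.div_const (((n : ℂ) + 1) ^ 2)
      refine this.congr_deriv ?_
      have hne : ((n : ℂ) + 1) ≠ 0 := Nat.cast_add_one_ne_zero n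
      field_simp
    · rw [mem_ball_zero_iff] at hy
      have h1 : (1 : ℝ) ≤ ‖((n : ℂ) + 1)‖ := by
        have : ((n : ℂ) + 1) = ((n + 1 : ℕ) : ℂ) := by push_cast; ring
        rw [this, Complex.norm_natCast]
        exact_mod_cast Nat.succ_le_succ (Nat.zero_le n)
      rw [norm_div, norm_pow]
      calc ‖y‖ ^ n / ‖(n : ℂ) + 1‖ ≤ ‖y‖ ^ n / 1 := by
            gcongr
            all_goals first | positivity | nlinarith
        _ = ‖y‖ ^ n := div_one _
        _ ≤ (9/10 : ℝ) ^ n := pow_le_pow_left₀ (norm_nonneg y) hy.le n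
    · simp only [zero_pow (Nat.succ_ne_zero _), zero_div]
      exact summable_zero
  refine H.congr_of_eventuallyEq ?_
  filter_upwards [Metric.ball_mem_nhds z (by linarith : (0:ℝ) < 1 - ‖z‖)] with w hw
  rw [mem_ball_iff_norm] at hw
  have : ‖w‖ < 1 := by
    calc ‖w‖ = ‖z + (w - z)‖ := by ring_nf
      _ ≤ ‖z‖ + ‖w - z‖ := norm_add_le _ _
      _ < 1 := by have := norm_sub_rev w z ▸ hw; linarith
  exact dilog_eq this

lemma tsum_deriv_eq {z : ℂ} (hz : ‖z‖ < 1) (h0 : z ≠ 0) :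
    ∑' n : ℕ, z ^ n / ((n : ℂ) + 1) = -Complex.log (1 - z) / z := by
  have hlog := hasSum_taylorSeries_neg_log hz
  have hsum0 : Summable (fun n : ℕ => z ^ n / (n : ℂ)) := hlog.summable
  have h1 : ∑' n : ℕ, z ^ (n + 1) / ((n : ℂ) + 1) = -Complex.log (1 - z) := by
    have := hsum0.tsum_eq_zero_add
    rw [hlog.tsum_eq] at this
    simp only [pow_zero, Nat.cast_zero, div_zero, zero_add] at this
    rw [this]
    exact tsum_congr fun n => by push_cast; ring
  have h2 : z * ∑' n : ℕ, z ^ n / ((n : ℂ) + 1) = -Complex.log (1 - z) := by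
    rw [← tsum_mul_left, ← h1]
    congr 1; ext n; ring
  rw [eq_div_iff h0, mul_comm]
  exact h2

set_option maxHeartbeats 1000000 in
lemma key_deriv (x : ℝ) (hx : x ∈ Set.Icc (0:ℝ) (1/3)) :
    HasDerivAt (fun y : ℝ => dilog (y : ℂ) + dilog (-(y:ℂ)/(1-(y:ℂ)))
      + (1/2) * (Complex.log (1-(y:ℂ)))^2) 0 x := by
  obtain ⟨hx0, hx3⟩ := hx
  have h1x : (0:ℝ) < 1 - x := by linarith
  have hw1 : ‖(x:ℂ)‖ < 9/10 := by
    rw [Complex.norm_real, Real.norm_eq_abs, _root_.abs_of_nonneg hx0]; linarith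
  have hu9 : ‖-(x:ℂ)/(1-(x:ℂ))‖ < 9/10 := by
    rw [show -(x:ℂ)/(1-(x:ℂ)) = ((-x/(1-x) : ℝ) : ℂ) by push_cast; ring,
      Complex.norm_real, Real.norm_eq_abs, abs_div, abs_neg, _root_.abs_of_nonneg hx0, _root_.abs_of_pos h1x]
    have : x / (1-x) ≤ 1/2 := by rw [div_le_iff₀ h1x]; linarith
    linarith
  have h1mw : (1 - (x:ℂ)) ≠ 0 := by
    rw [show (1-(x:ℂ)) = ((1-x:ℝ):ℂ) by push_cast; ring]
    exact_mod_cast h1x.ne'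
  have hd1 : HasDerivAt (fun y:ℝ => dilog (y:ℂ)) (∑' n : ℕ, (x:ℂ)^n/((n:ℂ)+1)) x :=
    (hasDerivAt_dilog hw1).comp_ofReal
  have hb : HasDerivAt (fun w:ℂ => 1-w) (-1) (x:ℂ) := by
    simpa using (hasDerivAt_id (x:ℂ)).const_sub 1
  have hu : HasDerivAt (fun w:ℂ => -w/(1-w)) (-1/(1-(x:ℂ))^2) (x:ℂ) := by
    have ha : HasDerivAt (fun w:ℂ => -w) (-1) (x:ℂ) := (hasDerivAt_id _).neg
    have := ha.div hb h1mw
    refine this.congr_deriv ?_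
    field_simp
    ring
  have hdx := hasDerivAt_dilog hu9
  have hd2c := HasDerivAt.comp (x:ℂ) hdx hu
  have hd2 : HasDerivAt (fun y:ℝ => dilog (-(y:ℂ)/(1-(y:ℂ))))
      ((∑' n : ℕ, (-(x:ℂ)/(1-(x:ℂ)))^n/((n:ℂ)+1)) * (-1/(1-(x:ℂ))^2)) x :=
    hd2c.comp_ofReal
  have hslit : (1 - (x:ℂ)) ∈ Complex.slitPlane := by
    rw [Complex.mem_slitPlane_iff]
    left
    simp only [Complex.sub_re, Complex.one_re, Complex.ofReal_re]
    linarith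
  have hlog : HasDerivAt (fun w:ℂ => Complex.log (1-w)) ((1-(x:ℂ))⁻¹ * (-1)) (x:ℂ) :=
    HasDerivAt.comp (x:ℂ) (Complex.hasDerivAt_log hslit) hb
  have hd3 : HasDerivAt (fun y:ℝ => (1/2 : ℂ) * (Complex.log (1-(y:ℂ)))^2)
      ((1/2) * ((2:ℕ) * (Complex.log (1-(x:ℂ)))^1 * ((1-(x:ℂ))⁻¹ * (-1)))) x :=
    ((hlog.pow 2).const_mul (1/2)).comp_ofReal
  have total := (hd1.add hd2).add hd3
  refine total.congr_deriv ?_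
  rcases eq_or_lt_of_le hx0 with h0 | h0
  · subst h0
    have t1 : ∑' n : ℕ, (0:ℂ)^n/((n:ℂ)+1) = 1 := by
      rw [tsum_eq_single 0 (fun n hn => by simp [zero_pow hn])]
      norm_num
    norm_num [t1, Complex.log_one]
  · have hwne : (x:ℂ) ≠ 0 := by exact_mod_cast h0.ne'
    have hune : -(x:ℂ)/(1-(x:ℂ)) ≠ 0 := div_ne_zero (neg_ne_zero.2 hwne) h1mw
    rw [tsum_deriv_eq (lt_trans hw1 (by norm_num)) hwne,
      tsum_deriv_eq (lt_trans hu9 (by norm_num)) hune]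
    have harg : 1 - (-(x:ℂ)/(1-(x:ℂ))) = (1-(x:ℂ))⁻¹ := by field_simp; ring
    rw [harg]
    have hloginv : Complex.log ((1-(x:ℂ))⁻¹) = -Complex.log (1-(x:ℂ)) := by
      apply Complex.log_inv
      rw [show (1-(x:ℂ)) = ((1-x:ℝ):ℂ) by push_cast; ring,
        Complex.arg_ofReal_of_nonneg h1x.le]
      exact Ne.symm Real.pi_ne_zero
    rw [hloginv]
    field_simp
    ring

/-- The subgroup `2πi·log ℚ*` of `ℂ`, spanned by `(2πi)²` and the elements
`2πi·log q` for `q ∈ ℚ*`. -/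
noncomputable def logQStarSubgroup : AddSubgroup ℂ :=
  AddSubgroup.closure ({(2 * (Real.pi : ℂ) * I) ^ 2} ∪
    {z : ℂ | ∃ q : ℚ, q ≠ 0 ∧ z = 2 * (Real.pi : ℂ) * I * Complex.log (q : ℂ)})

/-- `Li₂(1/3) + Li₂(−1/2) + (1/2)(log(3/2))² = 0` modulo `2πi·log ℚ*`. -/
theorem stmt0 :
    dilog (1 / 3) + dilog (-(1 / 2)) + (1 / 2) * (Complex.log ((3 : ℂ) / 2)) ^ 2
      ∈ logQStarSubgroup := by
  have hconst := constant_of_has_deriv_right_zero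
    (f := fun y : ℝ => dilog (y : ℂ) + dilog (-(y:ℂ)/(1-(y:ℂ)))
      + (1/2) * (Complex.log (1-(y:ℂ)))^2) (a := 0) (b := 1/3)
    (fun x hx => (key_deriv x hx).continuousAt.continuousWithinAt)
    (fun x hx => (key_deriv x (Set.Ico_subset_Icc_self hx)).hasDerivWithinAt)
    (1/3) (Set.right_mem_Icc.2 (by norm_num))
  have hF0 : dilog ((0:ℝ) : ℂ) + dilog (-((0:ℝ):ℂ)/(1-((0:ℝ):ℂ)))
      + (1/2) * (Complex.log (1-((0:ℝ):ℂ)))^2 = 0 := by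
    norm_num [dilog_zero, Complex.log_one]
  rw [hF0] at hconst
  push_cast at hconst
  have h2 : -(1/3 : ℂ)/(1-1/3) = -(1/2) := by norm_num
  have h3 : (1:ℂ) - 1/3 = ((3:ℂ)/2)⁻¹ := by norm_num
  have hlog32 : Complex.log (((3:ℂ)/2)⁻¹) = -Complex.log ((3:ℂ)/2) := by
    apply Complex.log_inv
    rw [show ((3:ℂ)/2) = (((3:ℝ)/2 : ℝ) : ℂ) by push_cast; ring,
      Complex.arg_ofReal_of_nonneg (by norm_num)]
    exact Ne.symm Real.pi_ne_zero
  rw [h2, h3, hlog32, neg_sq] at hconst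
  rw [hconst]
  exact zero_mem _
end

section
/- For the map Δ: Z[Q* − {1}] → Q* ⊗ Q*, {z} ↦ −(1−z) ⊗ z, extended linearly, and any five distinct points x₁,…,x₅ of P¹(Q), the alternating sum ∑_{i=1}^{5} (−1)^i {r(x₁,…,x̂ᵢ,…,x₅)} lies in the kernel of the induced map to (Q* ⊗ Q*) ⊗ Q antisymmetrized: δ{z} = −(1−z) ∧ z kills the five-term element. -/
open TensorProduct

/-- The `ℚ`-vector space `ℚ* ⊗ ℚ`. -/
abbrev QStarQ := ℚ ⊗[ℤ] (Additive ℚˣ)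

/-- The class of a rational number `q` in `ℚ* ⊗ ℚ` (zero if `q = 0`). -/
noncomputable def toQStarQ (q : ℚ) : QStarQ :=
  if h : q ≠ 0 then (1 : ℚ) ⊗ₜ[ℤ] Additive.ofMul (Units.mk0 q h) else 0

/-- The map `δ{z} = −(1−z) ∧ z`, with values in `Λ²(ℚ* ⊗ ℚ)`
(realized inside the exterior algebra of `ℚ* ⊗ ℚ`). -/
noncomputable def deltaEl (z : ℚ) : ExteriorAlgebra ℚ QStarQ :=
  - (ExteriorAlgebra.ι ℚ (toQStarQ (1 - z)) * ExteriorAlgebra.ι ℚ (toQStarQ z))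

/-- `2×2` determinant of homogeneous coordinates: nonzero iff two points of `P¹(ℚ)`
(given by coordinate vectors) are distinct. -/
def crd (v : Fin 5 → ℚ × ℚ) (i j : Fin 5) : ℚ := (v i).1 * (v j).2 - (v j).1 * (v i).2

/-- The cross-ratio `r(x₁,…,x̂ᵢ,…,x₅)` of the four points of `P¹(ℚ)` obtained by omitting
the `i`-th one, expressed in homogeneous coordinates; for the normalization
`r(∞,0,1,x) = x` one has `r(z₁,z₂,z₃,z₄) = (d₁₃ d₂₄)/(d₂₃ d₁₄)` with `d_{ij} = crd v i j`. -/
def crossRatioOmit (v : Fin 5 → ℚ × ℚ) (i : Fin 5) : ℚ :=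
  (crd v (i.succAbove 0) (i.succAbove 2) * crd v (i.succAbove 1) (i.succAbove 3)) /
  (crd v (i.succAbove 1) (i.succAbove 2) * crd v (i.succAbove 0) (i.succAbove 3))

section PGAux

lemma pg_tor : ((1:ℚ) ⊗ₜ[ℤ] Additive.ofMul (-1 : ℚˣ) : QStarQ) = 0 := by
  have h2 : (2:ℤ) • (Additive.ofMul (-1 : ℚˣ)) = 0 := by
    rw [two_smul, ← ofMul_mul]; norm_num
  calc (1:ℚ) ⊗ₜ[ℤ] Additive.ofMul (-1 : ℚˣ)
      = ((2:ℤ) • (1/2 : ℚ)) ⊗ₜ[ℤ] Additive.ofMul (-1 : ℚˣ) := by norm_num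
    _ = (1/2 : ℚ) ⊗ₜ[ℤ] ((2:ℤ) • Additive.ofMul (-1 : ℚˣ)) := by rw [smul_tmul]
    _ = 0 := by rw [h2, tmul_zero]

lemma pgL_mul {x y : ℚ} (hx : x ≠ 0) (hy : y ≠ 0) :
    toQStarQ (x * y) = toQStarQ x + toQStarQ y := by
  have hxy : x * y ≠ 0 := mul_ne_zero hx hy
  simp only [toQStarQ, dif_pos hx, dif_pos hy, dif_pos hxy]
  have : Units.mk0 (x*y) hxy = Units.mk0 x hx * Units.mk0 y hy := by ext; simp
  rw [this, ofMul_mul, tmul_add]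

lemma pgL_neg (x : ℚ) : toQStarQ (-x) = toQStarQ x := by
  by_cases hx : x = 0
  · simp [hx]
  have hnx : -x ≠ 0 := neg_ne_zero.mpr hx
  simp only [toQStarQ, dif_pos hx, dif_pos hnx]
  have : Units.mk0 (-x) hnx = (-1 : ℚˣ) * Units.mk0 x hx := by ext; simp
  rw [this, ofMul_mul, tmul_add, pg_tor, zero_add]

lemma pgL_one : toQStarQ 1 = 0 := by
  have h := pgL_mul (x := 1) (y := 1) one_ne_zero one_ne_zero
  rw [mul_one] at h
  exact add_eq_left.mp h.symm

lemma pgL_inv {x : ℚ} (hx : x ≠ 0) : toQStarQ x⁻¹ = - toQStarQ x := by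
  have h := pgL_mul hx (inv_ne_zero hx)
  rw [mul_inv_cancel₀ hx, pgL_one] at h
  exact eq_neg_of_add_eq_zero_right h.symm

lemma pgL_div {x y : ℚ} (hx : x ≠ 0) (hy : y ≠ 0) :
    toQStarQ (x / y) = toQStarQ x - toQStarQ y := by
  rw [div_eq_mul_inv, pgL_mul hx (inv_ne_zero hy), pgL_inv hy, sub_eq_add_neg]

open ExteriorAlgebra in
set_option maxHeartbeats 3200000 in
lemma pg_wedge5 (a b c d e f g h i j : QStarQ) :
    -(ι ℚ (e + j - (h + g)) * ι ℚ (f + i - (h + g)))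
    + ι ℚ (b + j - (h + d)) * ι ℚ (c + i - (h + d))
    - ι ℚ (a + j - (f + d)) * ι ℚ (c + g - (f + d))
    + ι ℚ (a + i - (e + d)) * ι ℚ (b + g - (e + d))
    - ι ℚ (a + h - (e + c)) * ι ℚ (b + f - (e + c)) = (0 : ExteriorAlgebra ℚ QStarQ) := by
  have hsw : ∀ p q : QStarQ, ι ℚ q * ι ℚ p = -(ι ℚ p * ι ℚ q) := fun p q =>
    eq_neg_of_add_eq_zero_right (ι_add_mul_swap p q)
  simp only [map_add, map_sub, add_mul, sub_mul, mul_add, mul_sub, ι_sq_zero,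
    hsw a b, hsw a c, hsw a d, hsw a e, hsw a f, hsw a g, hsw a h, hsw a i, hsw a j, hsw b c, hsw b d, hsw b e, hsw b f, hsw b g, hsw b h, hsw b i, hsw b j, hsw c d, hsw c e, hsw c f, hsw c g, hsw c h, hsw c i, hsw c j, hsw d e, hsw d f, hsw d g, hsw d h, hsw d i, hsw d j, hsw e f, hsw e g, hsw e h, hsw e i, hsw e j, hsw f g, hsw f h, hsw f i, hsw f j, hsw g h, hsw g i, hsw g j, hsw h i, hsw h j, hsw i j]
  abel

lemma pg_delta_eq (v : Fin 5 → ℚ × ℚ)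
    (hdist : ∀ i j : Fin 5, i ≠ j → crd v i j ≠ 0) (i : Fin 5) :
    deltaEl (crossRatioOmit v i) =
    -(ExteriorAlgebra.ι ℚ
        (toQStarQ (crd v (i.succAbove 0) (i.succAbove 1))
          + toQStarQ (crd v (i.succAbove 2) (i.succAbove 3))
          - (toQStarQ (crd v (i.succAbove 1) (i.succAbove 2))
            + toQStarQ (crd v (i.succAbove 0) (i.succAbove 3)))) *
      ExteriorAlgebra.ι ℚ
        (toQStarQ (crd v (i.succAbove 0) (i.succAbove 2))
          + toQStarQ (crd v (i.succAbove 1) (i.succAbove 3))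
          - (toQStarQ (crd v (i.succAbove 1) (i.succAbove 2))
            + toQStarQ (crd v (i.succAbove 0) (i.succAbove 3))))) := by
  have hinj : Function.Injective i.succAbove := Fin.succAbove_right_injective
  have hd : ∀ j k : Fin 4, j ≠ k → crd v (i.succAbove j) (i.succAbove k) ≠ 0 :=
    fun j k hjk => hdist _ _ (fun h => hjk (hinj h))
  have h01 := hd 0 1 (by decide)
  have h02 := hd 0 2 (by decide)
  have h03 := hd 0 3 (by decide)
  have h12 := hd 1 2 (by decide)
  have h13 := hd 1 3 (by decide)
  have h23 := hd 2 3 (by decide)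
  have hP : crd v (i.succAbove 0) (i.succAbove 1) * crd v (i.succAbove 2) (i.succAbove 3)
      - crd v (i.succAbove 0) (i.succAbove 2) * crd v (i.succAbove 1) (i.succAbove 3)
      + crd v (i.succAbove 0) (i.succAbove 3) * crd v (i.succAbove 1) (i.succAbove 2) = 0 := by
    simp only [crd]; ring
  have hrdef : crossRatioOmit v i =
      (crd v (i.succAbove 0) (i.succAbove 2) * crd v (i.succAbove 1) (i.succAbove 3)) /
      (crd v (i.succAbove 1) (i.succAbove 2) * crd v (i.succAbove 0) (i.succAbove 3)) := rfl
  have h1r : 1 - crossRatioOmit v i =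
      -((crd v (i.succAbove 0) (i.succAbove 1) * crd v (i.succAbove 2) (i.succAbove 3)) /
        (crd v (i.succAbove 1) (i.succAbove 2) * crd v (i.succAbove 0) (i.succAbove 3))) := by
    rw [hrdef]
    field_simp
    linear_combination hP
  rw [deltaEl, h1r, pgL_neg,
    pgL_div (mul_ne_zero h01 h23) (mul_ne_zero h12 h03),
    pgL_mul h01 h23, pgL_mul h12 h03, hrdef,
    pgL_div (mul_ne_zero h02 h13) (mul_ne_zero h12 h03),
    pgL_mul h02 h13, pgL_mul h12 h03]

end PGAux

/-- The five-term element is killed by `δ{z} = −(1−z) ∧ z`: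
for five distinct points of `P¹(ℚ)` (distinctness expressed by nonvanishing of the
`2×2` minors of homogeneous coordinates), assuming no cross-ratio equals `0` or `1`,
one has `δ(∑ᵢ (−1)^i {r(x₁,…,x̂ᵢ,…,x₅)}) = 0` in `Λ²(ℚ* ⊗ ℚ)`. -/


theorem stmt2 (v : Fin 5 → ℚ × ℚ)
    (hdist : ∀ i j : Fin 5, i ≠ j → crd v i j ≠ 0)
    (hne : ∀ i, crossRatioOmit v i ≠ 0 ∧ crossRatioOmit v i ≠ 1) :
    ∑ i : Fin 5, ((-1 : ℤ) ^ (i : ℕ)) • deltaEl (crossRatioOmit v i) = 0 := by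
  have W := pg_wedge5 (toQStarQ (crd v 0 1)) (toQStarQ (crd v 0 2)) (toQStarQ (crd v 0 3)) (toQStarQ (crd v 0 4)) (toQStarQ (crd v 1 2)) (toQStarQ (crd v 1 3)) (toQStarQ (crd v 1 4)) (toQStarQ (crd v 2 3)) (toQStarQ (crd v 2 4)) (toQStarQ (crd v 3 4))
  rw [Fin.sum_univ_five, pg_delta_eq v hdist 0, pg_delta_eq v hdist 1,
    pg_delta_eq v hdist 2, pg_delta_eq v hdist 3, pg_delta_eq v hdist 4]
  simp only [show ((0:Fin 5).succAbove 0 : Fin 5) = 1 from by decide,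
    show ((0:Fin 5).succAbove 1 : Fin 5) = 2 from by decide,
    show ((0:Fin 5).succAbove 2 : Fin 5) = 3 from by decide,
    show ((0:Fin 5).succAbove 3 : Fin 5) = 4 from by decide,
    show ((1:Fin 5).succAbove 0 : Fin 5) = 0 from by decide,
    show ((1:Fin 5).succAbove 1 : Fin 5) = 2 from by decide,
    show ((1:Fin 5).succAbove 2 : Fin 5) = 3 from by decide,
    show ((1:Fin 5).succAbove 3 : Fin 5) = 4 from by decide,
    show ((2:Fin 5).succAbove 0 : Fin 5) = 0 from by decide,
    show ((2:Fin 5).succAbove 1 : Fin 5) = 1 from by decide,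
    show ((2:Fin 5).succAbove 2 : Fin 5) = 3 from by decide,
    show ((2:Fin 5).succAbove 3 : Fin 5) = 4 from by decide,
    show ((3:Fin 5).succAbove 0 : Fin 5) = 0 from by decide,
    show ((3:Fin 5).succAbove 1 : Fin 5) = 1 from by decide,
    show ((3:Fin 5).succAbove 2 : Fin 5) = 2 from by decide,
    show ((3:Fin 5).succAbove 3 : Fin 5) = 4 from by decide,
    show ((4:Fin 5).succAbove 0 : Fin 5) = 0 from by decide,
    show ((4:Fin 5).succAbove 1 : Fin 5) = 1 from by decide,
    show ((4:Fin 5).succAbove 2 : Fin 5) = 2 from by decide,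
    show ((4:Fin 5).succAbove 3 : Fin 5) = 3 from by decide,
    show (((0:Fin 5)):ℕ) = 0 from rfl, show (((1:Fin 5)):ℕ) = 1 from rfl,
    show (((2:Fin 5)):ℕ) = 2 from rfl, show (((3:Fin 5)):ℕ) = 3 from rfl,
    show (((4:Fin 5)):ℕ) = 4 from rfl,
    show ((-1:ℤ))^(0:ℕ) = 1 from by norm_num,
    show ((-1:ℤ))^(1:ℕ) = -1 from by norm_num,
    show ((-1:ℤ))^(2:ℕ) = 1 from by norm_num,
    show ((-1:ℤ))^(3:ℕ) = -1 from by norm_num,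
    show ((-1:ℤ))^(4:ℕ) = 1 from by norm_num,
    one_smul, neg_one_zsmul, neg_neg]
  rw [← W]
  abel
end

section
/- In the free associative algebra B generated by a finite set S, with the cyclic envelope C(B) := B⁺/[B⁺,B⁺] and partial derivatives ∂/∂X_s: C(B) → B given by deleting one occurrence of X_s and summing over all occurrences, one has for every F ∈ C(B): ∑_{s∈S} [∂F/∂X_s, X_s] = 0 in B. -/
/-- For the free associative algebra `B` on a set `S` of generators and a cyclic word
`F = C(X_{w₀} ⋯ X_{w_{k−1}})` (cyclic words span the cyclic envelope
`C(B) = B⁺/[B⁺,B⁺]`), the cyclic partial derivatives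
`∂F/∂X_s = ∑_{i : wᵢ = s} X_{w_{i+1}} ⋯ X_{w_{i−1}}` satisfy
`∑_{s∈S} [∂F/∂X_s, X_s] = 0`.  Grouping the occurrences by position, this reads:
`∑_i [X_{w_{i+1}} ⋯ X_{w_{i−1}}, X_{w_i}] = 0`. -/
theorem stmt10 {S : Type*} (w : List S) :
    ∑ i : Fin w.length,
      ⁅((w.drop ((i : ℕ) + 1) ++ w.take (i : ℕ)).map (FreeAlgebra.ι ℚ)).prod,
        FreeAlgebra.ι ℚ (w.get i)⁆ = 0 := by
  set R : ℕ → FreeAlgebra ℚ S :=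
    fun i => ((w.drop i ++ w.take i).map (FreeAlgebra.ι ℚ)).prod with hR
  have key : ∀ i : Fin w.length,
      ⁅((w.drop ((i : ℕ) + 1) ++ w.take (i : ℕ)).map (FreeAlgebra.ι ℚ)).prod,
        FreeAlgebra.ι ℚ (w.get i)⁆ = R ((i : ℕ) + 1) - R (i : ℕ) := by
    intro i
    have hi : (i : ℕ) < w.length := i.isLt
    have ht : w.take ((i : ℕ) + 1) = w.take (i : ℕ) ++ [w.get i] := by
      rw [List.take_succ]
      simp [List.getElem?_eq_getElem hi, List.get_eq_getElem]
    have hd : w.drop (i : ℕ) = w.get i :: w.drop ((i : ℕ) + 1) := by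
      rw [List.drop_eq_getElem_cons hi]
      simp [List.get_eq_getElem]
    rw [Ring.lie_def, hR]
    simp only []
    rw [ht, hd, ← List.append_assoc]
    simp only [List.map_append, List.map_cons, List.map_singleton, List.prod_append,
      List.prod_cons, List.prod_singleton, List.map_nil, List.prod_nil, mul_one, mul_assoc]
  rw [Finset.sum_congr rfl (fun i _ => key i)]
  rw [Fin.sum_univ_eq_sum_range (fun i => R (i + 1) - R i)]
  rw [Finset.sum_range_sub]
  show R w.length - R 0 = 0
  rw [hR]
  simp
end

section
/- Let H be a finite-dimensional symplectic vector space over Q with symplectic basis {pᵢ, qᵢ}, S* a finite set, and A = A_{H,S*} the free associative algebra on H ⊕ Q[S*]. For F in the cyclic envelope C⁺(A), the assignment κ_F: pᵢ ↦ −∂F/∂qᵢ, qᵢ ↦ ∂F/∂pᵢ, X_s ↦ [X_s, ∂F/∂X_s] (s ∈ S*) extends to a derivation of A that annihilates the element X₀ := −∑_{s∈S*} X_s − ∑ᵢ [pᵢ, qᵢ]; i.e., κ_F is a special derivation. -/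
/-- The generators of `A_{H,S*}`: a symplectic basis `pᵢ, qᵢ` (`i : Fin n`) of `H`
and generators `X_s` for `s ∈ S*`. -/
abbrev SympGen (n : ℕ) (S : Type) : Type := (Fin n ⊕ Fin n) ⊕ S

/-- The product of generators corresponding to a word. -/
noncomputable def wordProd {n : ℕ} {S : Type} (w : List (SympGen n S)) :
    FreeAlgebra ℚ (SympGen n S) :=
  (w.map (FreeAlgebra.ι ℚ)).prod

/-- The cyclic derivative `∂/∂Y` of the cyclic word of `w`: delete one occurrence of
`Y` and read the remaining letters cyclically, summing over all occurrences. -/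
noncomputable def cyclicDeriv {n : ℕ} {S : Type} [DecidableEq S]
    (w : List (SympGen n S)) (Y : SympGen n S) : FreeAlgebra ℚ (SympGen n S) :=
  ∑ i : Fin w.length,
    if w.get i = Y then wordProd (w.drop ((i : ℕ) + 1) ++ w.take (i : ℕ)) else 0

/-- The cyclic derivative of a general element `F` of the cyclic envelope `C⁺(A)`,
presented as a finite `ℚ`-linear combination of cyclic words. -/
noncomputable def cyclicDerivF {n : ℕ} {S : Type} [DecidableEq S]
    (F : List (SympGen n S) →₀ ℚ) (Y : SympGen n S) : FreeAlgebra ℚ (SympGen n S) :=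
  F.sum fun w c => c • cyclicDeriv w Y

section aux
variable {n : ℕ} {S : Type} [Fintype S] [DecidableEq S]

lemma wordProd_cons (a : SympGen n S) (l : List (SympGen n S)) :
    wordProd (a :: l) = FreeAlgebra.ι ℚ a * wordProd l := by
  simp [wordProd]

lemma wordProd_append (l₁ l₂ : List (SympGen n S)) :
    wordProd (l₁ ++ l₂) = wordProd l₁ * wordProd l₂ := by
  simp [wordProd]

lemma key_word (w : List (SympGen n S)) :
    ∑ Y : SympGen n S, (FreeAlgebra.ι ℚ Y * cyclicDeriv w Y
      - cyclicDeriv w Y * FreeAlgebra.ι ℚ Y) = 0 := by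
  have h1 : ∑ Y : SympGen n S, FreeAlgebra.ι ℚ Y * cyclicDeriv w Y
      = ∑ i : Fin w.length, wordProd (w.drop (i : ℕ) ++ w.take (i : ℕ)) := by
    simp only [cyclicDeriv, Finset.mul_sum, mul_ite, mul_zero]
    rw [Finset.sum_comm]
    refine Finset.sum_congr rfl fun i _ => ?_
    rw [Finset.sum_ite_eq Finset.univ (w.get i)
      (fun Y => FreeAlgebra.ι ℚ Y * wordProd (w.drop ((i : ℕ) + 1) ++ w.take (i : ℕ)))]
    simp only [Finset.mem_univ, if_true]
    rw [← wordProd_cons, ← List.cons_append, List.get_eq_getElem, List.getElem_cons_drop]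
  have h2 : ∑ Y : SympGen n S, cyclicDeriv w Y * FreeAlgebra.ι ℚ Y
      = ∑ i : Fin w.length, wordProd (w.drop ((i : ℕ) + 1) ++ w.take ((i : ℕ) + 1)) := by
    simp only [cyclicDeriv, Finset.sum_mul, ite_mul, zero_mul]
    rw [Finset.sum_comm]
    refine Finset.sum_congr rfl fun i _ => ?_
    rw [Finset.sum_ite_eq Finset.univ (w.get i)
      (fun Y => wordProd (w.drop ((i : ℕ) + 1) ++ w.take (i : ℕ)) * FreeAlgebra.ι ℚ Y)]
    simp only [Finset.mem_univ, if_true]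
    rw [wordProd_append, wordProd_append, mul_assoc]
    congr 1
    rw [← List.take_concat_get i.isLt, List.concat_eq_append, wordProd_append]
    simp [wordProd]
  rw [Finset.sum_sub_distrib, h1, h2, sub_eq_zero]
  rw [Fin.sum_univ_eq_sum_range (fun i => wordProd (w.drop i ++ w.take i)),
    Fin.sum_univ_eq_sum_range (fun i => wordProd (w.drop (i + 1) ++ w.take (i + 1)))]
  have e1 := Finset.sum_range_succ (fun i => wordProd (w.drop i ++ w.take i)) w.length
  have e2 := Finset.sum_range_succ' (fun i => wordProd (w.drop i ++ w.take i)) w.length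
  beta_reduce at e1 e2
  have e := e1.symm.trans e2
  have hends : wordProd (w.drop w.length ++ w.take w.length) = wordProd (w.drop 0 ++ w.take 0) := by
    simp
  rw [hends] at e
  exact (add_right_cancel e)

lemma key (F : List (SympGen n S) →₀ ℚ) :
    ∑ Y : SympGen n S, (FreeAlgebra.ι ℚ Y * cyclicDerivF F Y
      - cyclicDerivF F Y * FreeAlgebra.ι ℚ Y) = 0 := by
  simp only [cyclicDerivF, Finsupp.sum, Finset.mul_sum, Finset.sum_mul, mul_smul_comm,
    smul_mul_assoc, ← Finset.sum_sub_distrib]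
  rw [Finset.sum_comm]
  refine Finset.sum_eq_zero fun w _ => ?_
  simp only [← smul_sub, ← Finset.smul_sum, key_word, smul_zero]
end aux

/-- For every `F` in the cyclic envelope of `A = A_{H,S*}`, the assignment
`κ_F : pᵢ ↦ −∂F/∂qᵢ, qᵢ ↦ ∂F/∂pᵢ, X_s ↦ [X_s, ∂F/∂X_s]` extends to a derivation of
`A` annihilating `X₀ := −∑_{s∈S*} X_s − ∑ᵢ [pᵢ, qᵢ]`, i.e. `κ_F` is a special
derivation. -/
theorem stmt11 (n : ℕ) (S : Type) [Fintype S] [DecidableEq S]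
    (F : List (SympGen n S) →₀ ℚ) :
    ∃ D : FreeAlgebra ℚ (SympGen n S) →ₗ[ℚ] FreeAlgebra ℚ (SympGen n S),
      (∀ a b, D (a * b) = D a * b + a * D b) ∧
      (∀ i : Fin n, D (FreeAlgebra.ι ℚ (Sum.inl (Sum.inl i) : SympGen n S))
          = - cyclicDerivF F (Sum.inl (Sum.inr i))) ∧
      (∀ i : Fin n, D (FreeAlgebra.ι ℚ (Sum.inl (Sum.inr i) : SympGen n S))
          = cyclicDerivF F (Sum.inl (Sum.inl i))) ∧
      (∀ s : S, D (FreeAlgebra.ι ℚ (Sum.inr s : SympGen n S))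
          = ⁅FreeAlgebra.ι ℚ (Sum.inr s : SympGen n S), cyclicDerivF F (Sum.inr s)⁆) ∧
      D (- (∑ s : S, FreeAlgebra.ι ℚ (Sum.inr s : SympGen n S))
          - ∑ i : Fin n, ⁅FreeAlgebra.ι ℚ (Sum.inl (Sum.inl i) : SympGen n S),
              FreeAlgebra.ι ℚ (Sum.inl (Sum.inr i) : SympGen n S)⁆) = 0 := by
    classical
  set A := FreeAlgebra ℚ (SympGen n S) with hA
  let d : SympGen n S → A := fun g =>
    match g with
    | Sum.inl (Sum.inl i) => - cyclicDerivF F (Sum.inl (Sum.inr i))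
    | Sum.inl (Sum.inr i) => cyclicDerivF F (Sum.inl (Sum.inl i))
    | Sum.inr s => ⁅FreeAlgebra.ι ℚ (Sum.inr s : SympGen n S), cyclicDerivF F (Sum.inr s)⁆
  let φ : A →ₐ[ℚ] TrivSqZeroExt A A :=
    FreeAlgebra.lift ℚ (fun g => (FreeAlgebra.ι ℚ g, d g))
  have hfst : ∀ a : A, (φ a).fst = a := by
    have h : (TrivSqZeroExt.fstHom ℚ A A).comp φ = AlgHom.id ℚ A := by
      apply FreeAlgebra.hom_ext
      funext g
      simp [φ, FreeAlgebra.lift_ι_apply]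
      exact congrArg TrivSqZeroExt.fst (FreeAlgebra.lift_ι_apply (R := ℚ) _ g)
    intro a
    exact AlgHom.congr_fun h a
  let D : A →ₗ[ℚ] A :=
    { toFun := fun a => (φ a).snd
      map_add' := fun a b => by simp
      map_smul' := fun c a => by simp }
  have hgen : ∀ g : SympGen n S, D (FreeAlgebra.ι ℚ g) = d g := by
    intro g
    change (φ (FreeAlgebra.ι ℚ g)).snd = d g
    rw [show φ (FreeAlgebra.ι ℚ g) = ((FreeAlgebra.ι ℚ g : A), d g) from
      FreeAlgebra.lift_ι_apply _ _]
    rfl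
  have hLeib : ∀ a b : A, D (a * b) = D a * b + a * D b := by
    intro a b
    show (φ (a * b)).snd = (φ a).snd * b + a * (φ b).snd
    rw [map_mul, TrivSqZeroExt.snd_mul, hfst, hfst, smul_eq_mul,
      op_smul_eq_mul, add_comm]
  have hp : ∀ i : Fin n, D (FreeAlgebra.ι ℚ (Sum.inl (Sum.inl i) : SympGen n S))
      = - cyclicDerivF F (Sum.inl (Sum.inr i)) := fun i => hgen _
  have hq : ∀ i : Fin n, D (FreeAlgebra.ι ℚ (Sum.inl (Sum.inr i) : SympGen n S))
      = cyclicDerivF F (Sum.inl (Sum.inl i)) := fun i => hgen _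
  have hs : ∀ s : S, D (FreeAlgebra.ι ℚ (Sum.inr s : SympGen n S))
      = ⁅FreeAlgebra.ι ℚ (Sum.inr s : SympGen n S), cyclicDerivF F (Sum.inr s)⁆ :=
    fun s => hgen _
  refine ⟨D, hLeib, hp, hq, hs, ?_⟩
  have hk := key F
  rw [Fintype.sum_sum_type, Fintype.sum_sum_type] at hk
  set cF := cyclicDerivF F with hcF
  set P : Fin n → A := fun i => FreeAlgebra.ι ℚ (Sum.inl (Sum.inl i) : SympGen n S) with hP
  set Q : Fin n → A := fun i => FreeAlgebra.ι ℚ (Sum.inl (Sum.inr i) : SympGen n S) with hQ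
  set X : S → A := fun s => FreeAlgebra.ι ℚ (Sum.inr s : SympGen n S) with hX
  have hbr : ∀ i : Fin n, D ⁅P i, Q i⁆
      = (P i * cF (Sum.inl (Sum.inl i)) - cF (Sum.inl (Sum.inl i)) * P i)
        + (Q i * cF (Sum.inl (Sum.inr i)) - cF (Sum.inl (Sum.inr i)) * Q i) := by
    intro i
    rw [Ring.lie_def, map_sub, hLeib, hLeib, hp i, hq i]
    rw [neg_mul, mul_neg]
    abel
  rw [map_sub, map_neg, map_sum, map_sum]
  rw [Finset.sum_congr rfl fun i _ => hbr i]
  rw [Finset.sum_add_distrib]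
  have hsX : ∑ s : S, D (X s)
      = ∑ s : S, (X s * cF (Sum.inr s) - cF (Sum.inr s) * X s) := by
    refine Finset.sum_congr rfl fun s _ => ?_
    rw [hs s, Ring.lie_def]
  rw [hsX]
  set SA := ∑ i : Fin n, (P i * cF (Sum.inl (Sum.inl i)) - cF (Sum.inl (Sum.inl i)) * P i)
  set SB := ∑ i : Fin n, (Q i * cF (Sum.inl (Sum.inr i)) - cF (Sum.inl (Sum.inr i)) * Q i)
  set SC := ∑ s : S, (X s * cF (Sum.inr s) - cF (Sum.inr s) * X s)
  have : SA + SB + SC = 0 := hk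
  linear_combination (norm := abel) -this
end

section
/- Let Σ_{p,q} denote the set of (p,q)-shuffles of {1,…,p+q}. The Hodge correlator satisfies the shuffle relations: for any vectors v₀,…,v_{p+q} ∈ V^∨_{X,S*} and any p,q ≥ 1, ∑_{σ∈Σ_{p,q}} Cor_H C(v₀ ⊗ v_{σ(1)} ⊗ … ⊗ v_{σ(p+q)}) = 0. More abstractly: the element of the space T¹_{(m)} of oriented decorated trivalent trees given by ∑_{σ∈Σ_{p,q}} (sum over all plane trivalent trees decorated by (v₀, v_{σ(1)}, …, v_{σ(m)}) with the orientation induced by the plane) equals zero, for m = p+q. -/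
/-- Plane binary trees with leaves labeled by `α`.  A plane trivalent tree with
`m+1` cyclically ordered external leaves, rooted at the leaf decorated by `v₀`,
is the same as such a binary tree with `m` labeled leaves (read left to right). -/
inductive PTree (α : Type) : Type
  | leaf (a : α) : PTree α
  | node (l r : PTree α) : PTree α

/-- The flip relation: exchanging the two branches at one internal vertex.  Two plane
structures on the same abstract (non-plane) decorated tree differ by a sequence of
flips, and each flip reverses the canonical orientation of the tree induced by the
orientation of the plane. -/
inductive PTree.Flip {α : Type} : PTree α → PTree α → Prop
  | here (l r : PTree α) : PTree.Flip (.node l r) (.node r l)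
  | left {l l' : PTree α} (r : PTree α) : PTree.Flip l l' → PTree.Flip (.node l r) (.node l' r)
  | right (l : PTree α) {r r' : PTree α} : PTree.Flip r r' → PTree.Flip (.node l r) (.node l r')

/-- All plane binary trees whose leaves, read from left to right, are labeled by the
given list (with a fuel parameter for termination). -/
def allTreesFuel {α : Type} : ℕ → List α → List (PTree α)
  | _, [] => []
  | _, [a] => [PTree.leaf a]
  | 0, _ => []
  | n + 1, l =>
      (List.range (l.length - 1)).flatMap fun i =>
        (allTreesFuel n (l.take (i + 1))).flatMap fun t₁ =>
          (allTreesFuel n (l.drop (i + 1))).map fun t₂ => PTree.node t₁ t₂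

/-- All plane binary trees with leaf labels given by the list `l`; equivalently, all
plane trivalent trees decorated by the cyclic word `C(v₀ ⊗ l₁ ⊗ ⋯ ⊗ l_m)`, rooted
at `v₀`. -/
def planeTrees {α : Type} (l : List α) : List (PTree α) := allTreesFuel l.length l

/-- The `(p, m−p)`-shuffle permutations of `Fin m`. -/
def shuffleSet (m p : ℕ) : Finset (Equiv.Perm (Fin m)) :=
  Finset.univ.filter (fun π =>
    (∀ i j : Fin m, i < j → (j : ℕ) < p → π i < π j) ∧
    (∀ i j : Fin m, i < j → p ≤ (i : ℕ) → π i < π j))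

/-- The word `(v_{σ(1)}, …, v_{σ(m)})` of the decorations following the root `v₀ = 0`:
position `j` carries the letter `σ(j) = π⁻¹(j)` (shifted by one to leave room for
the root label `0`). -/
def shuffleWord (m : ℕ) (π : Equiv.Perm (Fin m)) : List (Fin (m + 1)) :=
  List.ofFn fun j : Fin m => Fin.succ (π⁻¹ j)


set_option maxHeartbeats 1000000

section ShuffleRelationsAux

deriving instance DecidableEq for PTree

namespace PTree
def leaves {α : Type} : PTree α → List α
  | .leaf a => [a]
  | .node l r => l.leaves ++ r.leaves
lemma leaves_ne_nil {α : Type} (t : PTree α) : t.leaves ≠ [] := by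
  induction t with
  | leaf a => simp [leaves]
  | node l r ihl ihr => simp [leaves, ihl]

lemma one_le_length_leaves {α : Type} (t : PTree α) : 1 ≤ t.leaves.length := by
  have := leaves_ne_nil t
  cases h : t.leaves with
  | nil => exact absurd h this
  | cons a l => simp

end PTree

section FlipF
variable {α : Type} (P : α → Bool)

/-- `t` carries both colors. -/
def biCol (t : PTree α) : Bool := t.leaves.any P && t.leaves.any fun a => !P a

/-- Flip at the leftmost minimal bicolored vertex. -/
def flipF : PTree α → PTree α
  | .leaf a => .leaf a
  | .node l r =>
      if biCol P l then .node (flipF l) r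
      else if biCol P r then .node l (flipF r)
      else .node r l

variable {P}

lemma biCol_leaf_false (a : α) : biCol P (.leaf a) = false := by
  simp [biCol, PTree.leaves]

lemma mono_of_not_biCol {t : PTree α} (h : ¬ biCol P t) :
    (∀ a ∈ t.leaves, P a = true) ∨ (∀ a ∈ t.leaves, P a = false) := by
  simp only [biCol, Bool.and_eq_true, List.any_eq_true, not_and_or, not_exists] at h
  rcases h with h | h
  · right
    intro a ha
    have := h a
    simp only [ha, true_and] at this
    simpa using this
  · left
    intro a ha
    have := h a
    simp only [ha, true_and] at this
    simpa using this

lemma flip_flipF {t : PTree α} (h : biCol P t = true) : PTree.Flip t (flipF P t) := by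
  induction t with
  | leaf a => rw [biCol_leaf_false] at h; exact absurd h (by simp)
  | node l r ihl ihr =>
    rw [flipF]
    by_cases hl : biCol P l
    · rw [if_pos hl]; exact PTree.Flip.left r (ihl hl)
    · rw [if_neg hl]
      by_cases hr : biCol P r
      · rw [if_pos hr]; exact PTree.Flip.right l (ihr hr)
      · rw [if_neg hr]; exact PTree.Flip.here l r

lemma filter_flipF {t : PTree α} (h : biCol P t = true) :
    (flipF P t).leaves.filter P = t.leaves.filter P ∧
    ((flipF P t).leaves.filter fun a => !P a) = (t.leaves.filter fun a => !P a) := by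
  induction t with
  | leaf a => rw [biCol_leaf_false] at h; exact absurd h (by simp)
  | node l r ihl ihr =>
    rw [flipF]
    by_cases hl : biCol P l
    · rw [if_pos hl]
      obtain ⟨h1, h2⟩ := ihl hl
      simp [PTree.leaves, List.filter_append, h1, h2]
    · rw [if_neg hl]
      by_cases hr : biCol P r
      · rw [if_pos hr]
        obtain ⟨h1, h2⟩ := ihr hr
        simp [PTree.leaves, List.filter_append, h1, h2]
      · rw [if_neg hr]
        -- both mono; colors must differ
        have hml := mono_of_not_biCol hl
        have hmr := mono_of_not_biCol hr
        -- filter computations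
        have key : ∀ (x y : List α) (Q : α → Bool),
            (∀ a ∈ x, Q a = true) → (∀ a ∈ y, Q a = false) →
            (x ++ y).filter Q = x ∧ (y ++ x).filter Q = x := by
          intro x y Q hx hy
          constructor <;>
          · rw [List.filter_append, List.filter_eq_self.2 hx,
              List.filter_eq_nil_iff.2 (by intro a ha; simp [hy a ha])] <;> simp
        simp only [biCol, PTree.leaves, List.any_append, Bool.and_eq_true,
          Bool.or_eq_true, List.any_eq_true] at h
        obtain ⟨hP, hnP⟩ := h
        rcases hml with hml | hml <;> rcases hmr with hmr | hmr
        · exfalso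
          rcases hnP with ⟨a, ha, hpa⟩ | ⟨a, ha, hpa⟩
          · rw [hml a ha] at hpa; simp at hpa
          · rw [hmr a ha] at hpa; simp at hpa
        · -- l true, r false
          obtain ⟨k1, k2⟩ := key l.leaves r.leaves P hml hmr
          obtain ⟨k3, k4⟩ := key r.leaves l.leaves (fun a => !P a)
            (by intro a ha; simp [hmr a ha]) (by intro a ha; simp [hml a ha])
          simp only [PTree.leaves]
          exact ⟨by rw [k2, k1], by rw [k3, k4]⟩
        · -- l false, r true
          obtain ⟨k1, k2⟩ := key r.leaves l.leaves P hmr hml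
          obtain ⟨k3, k4⟩ := key l.leaves r.leaves (fun a => !P a)
            (by intro a ha; simp [hml a ha]) (by intro a ha; simp [hmr a ha])
          simp only [PTree.leaves]
          exact ⟨by rw [k1, k2], by rw [k4, k3]⟩
        · exfalso
          rcases hP with ⟨a, ha, hpa⟩ | ⟨a, ha, hpa⟩
          · rw [hml a ha] at hpa; simp at hpa
          · rw [hmr a ha] at hpa; simp at hpa

lemma any_eq_of_filter_eq {w w' : List α} {Q : α → Bool}
    (h : w.filter Q = w'.filter Q) : w.any Q = w'.any Q := by
  have key : ∀ u v : List α, u.filter Q = v.filter Q → u.any Q = true → v.any Q = true := by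
    intro u v huv hu
    rw [List.any_eq_true] at hu ⊢
    obtain ⟨a, ha, hq⟩ := hu
    have : a ∈ u.filter Q := List.mem_filter.2 ⟨ha, hq⟩
    rw [huv, List.mem_filter] at this
    exact ⟨a, this.1, this.2⟩
  rw [Bool.eq_iff_iff]
  exact ⟨key w w' h, key w' w h.symm⟩

lemma biCol_eq_of_filters {t t' : PTree α}
    (h1 : t'.leaves.filter P = t.leaves.filter P)
    (h2 : (t'.leaves.filter fun a => !P a) = (t.leaves.filter fun a => !P a)) :
    biCol P t' = biCol P t := by
  unfold biCol
  rw [any_eq_of_filter_eq h1, any_eq_of_filter_eq h2]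

lemma biCol_flipF {t : PTree α} (h : biCol P t = true) : biCol P (flipF P t) = true := by
  obtain ⟨h1, h2⟩ := filter_flipF h
  rw [biCol_eq_of_filters h1 h2]; exact h

lemma flipF_flipF {t : PTree α} (h : biCol P t = true) : flipF P (flipF P t) = t := by
  induction t with
  | leaf a => rw [biCol_leaf_false] at h; exact absurd h (by simp)
  | node l r ihl ihr =>
    rw [flipF]
    by_cases hl : biCol P l
    · rw [if_pos hl, flipF, if_pos (biCol_flipF hl), ihl hl]
    · rw [if_neg hl]
      by_cases hr : biCol P r
      · rw [if_pos hr, flipF, if_neg (by rwa [Bool.not_eq_true] at hl ⊢ <;> exact hl),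
          if_pos (biCol_flipF hr), ihr hr]
      · rw [if_neg hr, flipF]
        have hlr : biCol P (PTree.node l r) = true := h
        -- biCol r and biCol l are false
        rw [if_neg hr, if_neg hl]

end FlipF

lemma mem_allTreesFuel {α : Type} :
    ∀ (n : ℕ) (l : List α), l.length ≤ n + 1 →
      ∀ t : PTree α, t ∈ allTreesFuel n l ↔ t.leaves = l := by
  intro n
  induction n with
  | zero =>
    intro l hl t
    match l, hl with
    | [], _ => simpa [allTreesFuel] using (PTree.leaves_ne_nil t).symm ∘ Eq.symm
    | [a], _ =>
      cases t with
      | leaf b => simp [allTreesFuel, PTree.leaves]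
      | node l r =>
        simp only [allTreesFuel, List.mem_singleton]
        constructor
        · intro h; exact absurd h (by simp)
        · intro h
          have h2 : (PTree.node l r).leaves.length = 1 := by rw [h]; simp
          simp [PTree.leaves] at h2
          have := l.one_le_length_leaves; have := r.one_le_length_leaves
          omega
  | succ n ih =>
    intro l hl t
    match l with
    | [] => simpa [allTreesFuel] using (PTree.leaves_ne_nil t).symm ∘ Eq.symm
    | [a] =>
      cases t with
      | leaf b => simp [allTreesFuel, PTree.leaves]
      | node l r =>
        simp only [allTreesFuel, List.mem_singleton]
        constructor
        · intro h; exact absurd h (by simp)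
        · intro h
          have h2 : (PTree.node l r).leaves.length = 1 := by rw [h]; simp
          simp [PTree.leaves] at h2
          have := l.one_le_length_leaves; have := r.one_le_length_leaves
          omega
    | a :: b :: rest =>
      show t ∈ (List.range ((a :: b :: rest).length - 1)).flatMap _ ↔ _
      set L : List α := a :: b :: rest with hL
      have hlen : 2 ≤ L.length := by simp [hL]
      simp only [List.mem_flatMap, List.mem_map, List.mem_range]
      constructor
      · rintro ⟨i, hi, t₁, ht₁, t₂, ht₂, rfl⟩
        have h₁ : t₁.leaves = L.take (i + 1) := by
          rw [← ih (L.take (i+1)) (by simp; omega) t₁]; exact ht₁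
        have h₂ : t₂.leaves = L.drop (i + 1) := by
          rw [← ih (L.drop (i+1)) (by simp; omega) t₂]; exact ht₂
        simp [PTree.leaves, h₁, h₂]
      · intro h
        cases t with
        | leaf c =>
          exfalso
          have : L.length = 1 := by rw [← h]; simp [PTree.leaves]
          omega
        | node t₁ t₂ =>
          have h1 := t₁.one_le_length_leaves
          have h2 := t₂.one_le_length_leaves
          have hsum : L.length = t₁.leaves.length + t₂.leaves.length := by
            rw [← h]; simp [PTree.leaves]
          refine ⟨t₁.leaves.length - 1, ?_, t₁, ?_, t₂, ?_, rfl⟩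
          · omega
          · rw [ih _ (by simp; omega) t₁]
            have : t₁.leaves.length - 1 + 1 = t₁.leaves.length := by omega
            rw [this, ← h]
            simp [PTree.leaves, List.take_left']
          · rw [ih _ (by simp; omega) t₂]
            have : t₁.leaves.length - 1 + 1 = t₁.leaves.length := by omega
            rw [this, ← h]
            simp [PTree.leaves, List.drop_left']


lemma leaves_of_mem_allTreesFuel {α : Type} :
    ∀ (n : ℕ) (l : List α) (t : PTree α), t ∈ allTreesFuel n l → t.leaves = l := by
  intro n
  induction n with
  | zero =>
    intro l t ht
    match l with
    | [] => simp [allTreesFuel] at ht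
    | [a] => simp [allTreesFuel] at ht; simp [ht, PTree.leaves]
    | a :: b :: rest => simp [allTreesFuel] at ht
  | succ n ih =>
    intro l t ht
    match l with
    | [] => simp [allTreesFuel] at ht
    | [a] => simp [allTreesFuel] at ht; simp [ht, PTree.leaves]
    | a :: b :: rest =>
      have ht' : t ∈ (List.range ((a :: b :: rest).length - 1)).flatMap fun i =>
          (allTreesFuel n ((a :: b :: rest).take (i + 1))).flatMap fun t₁ =>
            (allTreesFuel n ((a :: b :: rest).drop (i + 1))).map fun t₂ => PTree.node t₁ t₂ := ht
      simp only [List.mem_flatMap, List.mem_map, List.mem_range] at ht'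
      obtain ⟨i, hi, t₁, ht₁, t₂, ht₂, rfl⟩ := ht'
      have h₁ := ih _ _ ht₁
      have h₂ := ih _ _ ht₂
      simp [PTree.leaves, h₁, h₂]

lemma nodup_allTreesFuel {α : Type} :
    ∀ (n : ℕ) (l : List α), (allTreesFuel n l).Nodup := by
  intro n
  induction n with
  | zero =>
    intro l
    match l with
    | [] => simp [allTreesFuel]
    | [a] => simp [allTreesFuel]
    | a :: b :: rest => simp [allTreesFuel]
  | succ n ih =>
    intro l
    match l with
    | [] => simp [allTreesFuel]
    | [a] => simp [allTreesFuel]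
    | a :: b :: rest =>
      show ((List.range ((a :: b :: rest).length - 1)).flatMap fun i =>
          (allTreesFuel n ((a :: b :: rest).take (i + 1))).flatMap fun t₁ =>
            (allTreesFuel n ((a :: b :: rest).drop (i + 1))).map fun t₂ =>
              PTree.node t₁ t₂).Nodup
      set L : List α := a :: b :: rest with hL
      rw [List.nodup_flatMap]
      constructor
      · intro i _
        rw [List.nodup_flatMap]
        constructor
        · intro t₁ _
          exact (ih _).map (fun x y hxy => by injection hxy)
        · refine (ih _).pairwise_of_forall_ne ?_
          intro t₁ _ t₁' _ hne
          intro x hx hx'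
          simp only [Function.onFun, List.mem_map] at hx hx'
          obtain ⟨u, _, rfl⟩ := hx
          obtain ⟨u', _, h⟩ := hx'
          injection h.symm with h1 h2
          exact hne h1
      · refine List.Pairwise.imp_of_mem ?_ List.nodup_range
        intro i j hi hj hne
        simp only [List.mem_range] at hi hj
        intro x hx hx'
        simp only [List.mem_flatMap, List.mem_map] at hx hx'
        obtain ⟨t₁, ht₁, t₂, ht₂, rfl⟩ := hx
        obtain ⟨s₁, hs₁, s₂, hs₂, h⟩ := hx'
        injection h.symm with h1 h2
        subst h1
        have e₁ := leaves_of_mem_allTreesFuel _ _ _ ht₁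
        have e₂ := leaves_of_mem_allTreesFuel _ _ _ hs₁
        rw [e₁] at e₂
        have := congrArg List.length e₂
        simp only [List.length_take] at this
        have hlen : 2 ≤ L.length := by simp [hL]
        omega


section Words

lemma pairwise_of_filter_pairwise {α : Type} {Q : α → Bool} {R : α → α → Prop} :
    ∀ {w : List α}, (w.filter Q).Pairwise R →
      w.Pairwise fun a b => Q a = true → Q b = true → R a b := by
  intro w
  induction w with
  | nil => intro _; exact List.Pairwise.nil
  | cons a t ih =>
    intro h
    by_cases ha : Q a = true
    · rw [List.filter_cons_of_pos ha] at h
      refine List.Pairwise.cons ?_ (ih h.tail)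
      intro b hb _ hqb
      exact (List.pairwise_cons.1 h).1 b (List.mem_filter.2 ⟨hb, hqb⟩)
    · rw [List.filter_cons_of_neg ha] at h
      exact List.Pairwise.cons (fun b _ ha' _ => absurd ha' ha) (ih h)

variable (m p q : ℕ)

/-- The sorted list `[1, …, p]` in `Fin (m+1)`. -/
def lowL (h : p ≤ m) : List (Fin (m + 1)) :=
  List.ofFn fun i : Fin p => ⟨i.val + 1, by have := i.isLt; omega⟩

/-- The sorted list `[p+1, …, p+q]` in `Fin (m+1)`. -/
def highL (h : p + q ≤ m) : List (Fin (m + 1)) :=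
  List.ofFn fun i : Fin q => ⟨p + i.val + 1, by have := i.isLt; omega⟩

variable {m p q}

lemma lowL_sorted (h : p ≤ m) : (lowL m p h).Pairwise (· < ·) := by
  rw [lowL, List.pairwise_ofFn]
  intro i j hij
  simp only [Fin.mk_lt_mk]
  have := Fin.lt_def.1 hij
  omega

lemma highL_sorted (h : p + q ≤ m) : (highL m p q h).Pairwise (· < ·) := by
  rw [highL, List.pairwise_ofFn]
  intro i j hij
  simp only [Fin.mk_lt_mk]
  have := Fin.lt_def.1 hij
  omega

lemma mem_lowL (h : p ≤ m) {a : Fin (m + 1)} :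
    a ∈ lowL m p h ↔ 1 ≤ a.val ∧ a.val ≤ p := by
  simp only [lowL, List.mem_ofFn, Set.mem_range]
  constructor
  · rintro ⟨i, rfl⟩
    have := i.isLt
    constructor <;> simp <;> omega
  · rintro ⟨h1, h2⟩
    exact ⟨⟨a.val - 1, by omega⟩, by apply Fin.ext; simp; omega⟩

lemma mem_highL (h : p + q ≤ m) {a : Fin (m + 1)} :
    a ∈ highL m p q h ↔ p + 1 ≤ a.val ∧ a.val ≤ p + q := by
  simp only [highL, List.mem_ofFn, Set.mem_range]
  constructor
  · rintro ⟨i, rfl⟩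
    have := i.isLt
    constructor <;> simp <;> omega
  · rintro ⟨h1, h2⟩
    exact ⟨⟨a.val - p - 1, by omega⟩, by apply Fin.ext; simp; omega⟩

lemma lowL_length (h : p ≤ m) : (lowL m p h).length = p := by simp [lowL]
lemma highL_length (h : p + q ≤ m) : (highL m p q h).length = q := by simp [highL]

lemma mem_shuffleWord {π : Equiv.Perm (Fin m)} {a : Fin (m + 1)} :
    a ∈ shuffleWord m π ↔ 1 ≤ a.val := by
  simp only [shuffleWord, List.mem_ofFn, Set.mem_range]
  constructor
  · rintro ⟨j, rfl⟩; simp [Fin.val_succ]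
  · intro h1
    have ham : a.val - 1 < m := by have := a.isLt; omega
    refine ⟨π ⟨a.val - 1, ham⟩, ?_⟩
    apply Fin.ext
    simp [Fin.val_succ]
    omega

lemma shuffleWord_nodup (π : Equiv.Perm (Fin m)) : (shuffleWord m π).Nodup := by
  rw [shuffleWord, List.nodup_ofFn]
  intro i j hij
  exact π⁻¹.injective (Fin.succ_injective _ hij)

lemma shuffleWord_length (π : Equiv.Perm (Fin m)) : (shuffleWord m π).length = m := by
  simp [shuffleWord]

lemma shuffleWord_injective {π π' : Equiv.Perm (Fin m)}
    (h : shuffleWord m π = shuffleWord m π') : π = π' := by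
  simp only [shuffleWord] at h
  rw [List.ofFn_inj] at h
  have : π⁻¹ = π'⁻¹ := by
    apply Equiv.ext
    intro j
    exact Fin.succ_injective _ (congrFun h j)
  exact inv_injective this

lemma pairwise_low_aux {π : Equiv.Perm (Fin m)}
    (hc1 : ∀ i j : Fin m, i < j → (j : ℕ) < p → π i < π j) :
    (shuffleWord m π).Pairwise fun a b => a.val ≤ p → b.val ≤ p → a < b := by
  rw [shuffleWord, List.pairwise_ofFn]
  intro u v huv hau hbv
  simp only [Fin.val_succ] at hau hbv
  have hip : ((π⁻¹ u : Fin m) : ℕ) < p := by omega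
  have hij : (π⁻¹ u : Fin m) < π⁻¹ v := by
    rcases lt_trichotomy (π⁻¹ u : Fin m) (π⁻¹ v) with h | h | h
    · exact h
    · exact absurd (congrArg π h) (by simp [Equiv.Perm.coe_inv]; exact Fin.ne_of_lt huv)
    · exfalso
      have hlt := hc1 _ _ h hip
      simp only [Equiv.Perm.coe_inv, Equiv.apply_symm_apply] at hlt
      exact absurd hlt (not_lt.2 (le_of_lt huv))
  exact Fin.succ_lt_succ_iff.2 hij

lemma pairwise_high_aux {π : Equiv.Perm (Fin m)}
    (hc2 : ∀ i j : Fin m, i < j → p ≤ (i : ℕ) → π i < π j) :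
    (shuffleWord m π).Pairwise fun a b => p < a.val → p < b.val → a < b := by
  rw [shuffleWord, List.pairwise_ofFn]
  intro u v huv hau hbv
  simp only [Fin.val_succ] at hau hbv
  have hjp : p ≤ ((π⁻¹ v : Fin m) : ℕ) := by omega
  have hij : (π⁻¹ u : Fin m) < π⁻¹ v := by
    rcases lt_trichotomy (π⁻¹ u : Fin m) (π⁻¹ v) with h | h | h
    · exact h
    · exact absurd (congrArg π h) (by simp [Equiv.Perm.coe_inv]; exact Fin.ne_of_lt huv)
    · exfalso
      have hlt := hc2 _ _ h hjp
      simp only [Equiv.Perm.coe_inv, Equiv.apply_symm_apply] at hlt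
      exact absurd hlt (not_lt.2 (le_of_lt huv))
  exact Fin.succ_lt_succ_iff.2 hij

/-- Forward direction: the word of a shuffle is "good". -/
lemma filter_shuffleWord {π : Equiv.Perm (Fin m)} (hπ : π ∈ shuffleSet m p)
    (h1 : p ≤ m) (h2 : p + q ≤ m) (hm : p + q = m) :
    (shuffleWord m π).filter (fun a => decide (a.val ≤ p)) = lowL m p h1 ∧
    ((shuffleWord m π).filter fun a => !decide (a.val ≤ p)) = highL m p q h2 := by
  haveI : IsAntisymm (Fin (m+1)) (· < ·) := ⟨fun a b hab hba => (lt_asymm hab hba).elim⟩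
  rw [shuffleSet, Finset.mem_filter] at hπ
  obtain ⟨-, hc1, hc2⟩ := hπ
  have hnd := shuffleWord_nodup π
  constructor
  · have hpw := pairwise_low_aux hc1
    apply (fun hp hs => List.Perm.eq_of_pairwise' (r := (· < ·)) hs (lowL_sorted h1) hp) ?_ ?_
    · rw [List.perm_ext_iff_of_nodup (hnd.filter _) ((lowL_sorted h1).imp ne_of_lt)]
      intro a
      rw [List.mem_filter, mem_lowL h1, mem_shuffleWord]
      simp only [decide_eq_true_eq]
    · refine List.Pairwise.imp_of_mem ?_ ((hpw.sublist List.filter_sublist))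
      intro a b ha hb hr
      rw [List.mem_filter] at ha hb
      simp only [decide_eq_true_eq] at ha hb
      exact hr ha.2 hb.2
  · have hpw := pairwise_high_aux hc2
    apply (fun hp hs => List.Perm.eq_of_pairwise' (r := (· < ·)) hs (highL_sorted h2) hp) ?_ ?_
    · rw [List.perm_ext_iff_of_nodup (hnd.filter _) ((highL_sorted h2).imp ne_of_lt)]
      intro a
      rw [List.mem_filter, mem_highL h2, mem_shuffleWord]
      simp only [Bool.not_eq_true', decide_eq_false_iff_not]
      have := a.isLt
      constructor
      · rintro ⟨ha1, ha2⟩; omega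
      · rintro ⟨ha1, ha2⟩; omega
    · refine List.Pairwise.imp_of_mem ?_ ((hpw.sublist List.filter_sublist))
      intro a b ha hb hr
      rw [List.mem_filter] at ha hb
      simp only [Bool.not_eq_true', decide_eq_false_iff_not] at ha hb
      exact hr (by omega) (by omega)

end Words

section Backward

variable {m p q : ℕ}

lemma good_word {w : List (Fin (m + 1))} (h1 : p ≤ m) (h2 : p + q ≤ m) (hm : p + q = m)
    (hw1 : w.filter (fun a => decide (a.val ≤ p)) = lowL m p h1)
    (hw2 : (w.filter fun a => !decide (a.val ≤ p)) = highL m p q h2) :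
    ∃ π ∈ shuffleSet m p, shuffleWord m π = w := by
  have hlen : w.length = m := by
    have hpl := (List.filter_append_perm (fun a => decide (a.val ≤ p)) w).length_eq
    rw [List.length_append, hw1, hw2, lowL_length h1, highL_length h2] at hpl
    omega
  have hmem1 : ∀ a ∈ w, 1 ≤ a.val := by
    intro a ha
    by_cases hap : a.val ≤ p
    · have : a ∈ lowL m p h1 := by
        rw [← hw1]; exact List.mem_filter.2 ⟨ha, by simp [hap]⟩
      exact ((mem_lowL h1).1 this).1
    · have : a ∈ highL m p q h2 := by
        rw [← hw2]; exact List.mem_filter.2 ⟨ha, by simp [hap]⟩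
      have := ((mem_highL h2).1 this).1
      omega
  have hnd : w.Nodup := by
    rw [List.nodup_iff_count_le_one]
    intro a
    by_cases hap : a.val ≤ p
    · have hc : List.count a (w.filter (fun a => decide (a.val ≤ p))) = List.count a w :=
        List.count_filter (by simp [hap])
      rw [hw1] at hc
      rw [← hc]
      exact List.nodup_iff_count_le_one.1 ((lowL_sorted h1).imp ne_of_lt) a
    · have hc : List.count a (w.filter fun a => !decide (a.val ≤ p)) = List.count a w :=
        List.count_filter (by simp [hap])
      rw [hw2] at hc
      rw [← hc]
      exact List.nodup_iff_count_le_one.1 ((highL_sorted h2).imp ne_of_lt) a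
  have hb : ∀ j : Fin m, (j : ℕ) < w.length := fun j => by rw [hlen]; exact j.isLt
  obtain ⟨g, hg⟩ : ∃ g : Fin m → Fin m, ∀ j : Fin m, (g j : ℕ) = (w[(j : ℕ)]'(hb j)).val - 1 :=
    ⟨fun j => ⟨(w[(j : ℕ)]'(hb j)).val - 1, by
      have h5 := hmem1 _ (List.getElem_mem (hb j))
      have h6 := (w[(j : ℕ)]'(hb j)).isLt
      omega⟩, fun j => rfl⟩
  have hval : ∀ j : Fin m, (w[(j : ℕ)]'(hb j)).val = (g j : ℕ) + 1 := by
    intro j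
    have h5 := hmem1 _ (List.getElem_mem (hb j))
    have := hg j
    omega
  have ginj : Function.Injective g := by
    intro j j' hjj
    have e1 := hval j
    have e2 := hval j'
    rw [hjj] at e1
    have : w[(j : ℕ)]'(hb j) = w[(j' : ℕ)]'(hb j') := Fin.ext (by omega)
    have hjv := List.nodup_iff_injective_get.1 hnd
        (a₁ := ⟨(j : ℕ), hb j⟩) (a₂ := ⟨(j' : ℕ), hb j'⟩) (by simpa [List.get_eq_getElem] using this)
    rw [Fin.mk.injEq] at hjv
    exact Fin.ext hjv
  let e := Equiv.ofBijective g (Finite.injective_iff_bijective.1 ginj)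
  refine ⟨e.symm, ?_, ?_⟩
  · -- membership in shuffleSet
    have hge : ∀ j : Fin m, e.symm⁻¹ j = g j := fun j => by
      rw [Equiv.Perm.inv_def, Equiv.symm_symm]; rfl
    have hval' : ∀ i : Fin m, (w[((e.symm : Equiv.Perm (Fin m)) i : ℕ)]'(hb _)).val
        = (i : ℕ) + 1 := by
      intro i
      have := hval ((e.symm : Equiv.Perm (Fin m)) i)
      rw [this]
      have : g (e.symm i) = i := e.apply_symm_apply i
      rw [this]
    have hp_low : w.Pairwise fun a b => a.val ≤ p → b.val ≤ p → a < b := by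
      have hps : (w.filter (fun a => decide (a.val ≤ p))).Pairwise (· < ·) := by
        rw [hw1]; exact lowL_sorted h1
      refine (pairwise_of_filter_pairwise hps).imp ?_
      intro a b hab ha hbp
      exact hab (by simp [ha]) (by simp [hbp])
    have hp_high : w.Pairwise fun a b => p < a.val → p < b.val → a < b := by
      have hps : (w.filter fun a => !decide (a.val ≤ p)).Pairwise (· < ·) := by
        rw [hw2]; exact highL_sorted h2
      refine (pairwise_of_filter_pairwise hps).imp ?_
      intro a b hab ha hbp
      exact hab (by simp [Nat.not_le.2 ha]) (by simp [Nat.not_le.2 hbp])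
    rw [shuffleSet, Finset.mem_filter]
    refine ⟨Finset.mem_univ _, ?_, ?_⟩
    · intro i j hij hjp
      set σ : Equiv.Perm (Fin m) := e.symm with hσ
      rcases lt_trichotomy (σ i) (σ j) with h | h | h
      · exact h
      · exact absurd (σ.injective h) (Fin.ne_of_lt hij)
      · exfalso
        have hPW := List.pairwise_iff_getElem.1 hp_low
        have := hPW ((σ j) : ℕ) ((σ i) : ℕ) (hb _) (hb _) h
          (by rw [hval' j]; omega)
          (by rw [hval' i]; have := Fin.lt_def.1 hij; omega)
        rw [Fin.lt_def, hval' j, hval' i] at this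
        have := Fin.lt_def.1 hij
        omega
    · intro i j hij hip
      set σ : Equiv.Perm (Fin m) := e.symm with hσ
      rcases lt_trichotomy (σ i) (σ j) with h | h | h
      · exact h
      · exact absurd (σ.injective h) (Fin.ne_of_lt hij)
      · exfalso
        have hPW := List.pairwise_iff_getElem.1 hp_high
        have := hPW ((σ j) : ℕ) ((σ i) : ℕ) (hb _) (hb _) h
          (by rw [hval' j]; have := Fin.lt_def.1 hij; omega)
          (by rw [hval' i]; omega)
        rw [Fin.lt_def, hval' j, hval' i] at this
        have := Fin.lt_def.1 hij
        omega
  · -- the word equals w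
    apply List.ext_getElem
    · rw [shuffleWord_length, hlen]
    · intro u hu1 hu2
      rw [shuffleWord_length] at hu1
      have : (shuffleWord m e.symm)[u]'(by rw [shuffleWord_length]; exact hu1)
          = Fin.succ (e.symm⁻¹ ⟨u, hu1⟩) := by
        simp only [shuffleWord, List.getElem_ofFn]
      rw [this]
      have hge : e.symm⁻¹ (⟨u, hu1⟩ : Fin m) = g ⟨u, hu1⟩ := by
        rw [Equiv.Perm.inv_def, Equiv.symm_symm]; rfl
      rw [hge]
      apply Fin.ext
      rw [Fin.val_succ]
      have := hval ⟨u, hu1⟩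
      simp only at this ⊢
      omega

end Backward


lemma mem_planeTrees {α : Type} {l : List α} {t : PTree α} :
    t ∈ planeTrees l ↔ t.leaves = l :=
  mem_allTreesFuel l.length l (Nat.le_succ _) t

lemma nodup_planeTrees {α : Type} (l : List α) : (planeTrees l).Nodup :=
  nodup_allTreesFuel _ _


end ShuffleRelationsAux

/-- Shuffle relations for the Hodge correlators (Proposition 7.3.06.4/Corollary
7.3.06.2): for `p, q ≥ 1`, the element of the group `T¹_{(m)}` of oriented decorated
trees given by `∑_{σ∈Σ_{p,q}}` (sum over all plane trivalent trees decorated by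
`(v₀, v_{σ(1)}, …, v_{σ(p+q)})`, with the orientation induced by the plane) is zero.
Equivalently: for every amplitude `I` — such as the Hodge correlator integrand — that
depends on a decorated plane trivalent tree only through the underlying abstract tree
and the plane-induced orientation (i.e. `I` changes sign under every flip), the total
correlator satisfies `∑_{σ∈Σ_{p,q}} Cor(C(v₀ ⊗ v_{σ(1)} ⊗ ⋯ ⊗ v_{σ(p+q)})) = 0`. -/
theorem stmt13 (m p q : ℕ) (hp : 0 < p) (hq : 0 < q) (hm : p + q = m)
    (I : PTree (Fin (m + 1)) → ℂ)
    (hflip : ∀ t t' : PTree (Fin (m + 1)), PTree.Flip t t' → I t' = - I t) :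
    ∑ π ∈ shuffleSet m p, ((planeTrees (shuffleWord m π)).map I).sum = 0 := by
  classical
  have h1 : p ≤ m := by omega
  have h2 : p + q ≤ m := le_of_eq hm
  set P : Fin (m + 1) → Bool := fun a => decide (a.val ≤ p) with hP
  set S : Finset (PTree (Fin (m + 1))) :=
    (shuffleSet m p).biUnion (fun π => (planeTrees (shuffleWord m π)).toFinset) with hS
  have hmemS : ∀ t : PTree (Fin (m + 1)), t ∈ S ↔
      (t.leaves.filter P = lowL m p h1 ∧ (t.leaves.filter fun a => !P a) = highL m p q h2) := by
    intro t
    rw [hS, Finset.mem_biUnion]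
    constructor
    · rintro ⟨π, hπ, ht⟩
      rw [List.mem_toFinset, mem_planeTrees] at ht
      obtain ⟨e1, e2⟩ := filter_shuffleWord (q := q) hπ h1 h2 hm
      rw [ht]
      exact ⟨e1, e2⟩
    · rintro ⟨e1, e2⟩
      obtain ⟨π, hπ, hw⟩ := good_word h1 h2 hm e1 e2
      exact ⟨π, hπ, by rw [List.mem_toFinset, mem_planeTrees, hw]⟩
  have hbicol : ∀ t ∈ S, biCol P t = true := by
    intro t ht
    obtain ⟨e1, e2⟩ := (hmemS t).1 ht
    have hlownil : lowL m p h1 ≠ [] := by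
      intro hcon
      have := lowL_length h1
      rw [hcon] at this
      simp at this
      omega
    have hhighnil : highL m p q h2 ≠ [] := by
      intro hcon
      have := highL_length h2
      rw [hcon] at this
      simp at this
      omega
    obtain ⟨a, ha⟩ := List.exists_mem_of_ne_nil _ hlownil
    obtain ⟨b, hb⟩ := List.exists_mem_of_ne_nil _ hhighnil
    rw [← e1, List.mem_filter] at ha
    rw [← e2, List.mem_filter] at hb
    rw [biCol, Bool.and_eq_true, List.any_eq_true, List.any_eq_true]
    exact ⟨⟨a, ha.1, ha.2⟩, ⟨b, hb.1, hb.2⟩⟩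
  have hclosed : ∀ t ∈ S, flipF P t ∈ S := by
    intro t ht
    obtain ⟨e1, e2⟩ := (hmemS t).1 ht
    obtain ⟨f1, f2⟩ := filter_flipF (hbicol t ht)
    rw [hmemS, f1, f2]
    exact ⟨e1, e2⟩
  have hmain : ∑ t ∈ S, I t = 0 := by
    have hneg : ∑ t ∈ S, I t = ∑ t ∈ S, (- I t) := by
      refine Finset.sum_bij' (fun t _ => flipF P t) (fun t _ => flipF P t)
        (fun t ht => hclosed t ht) (fun t ht => hclosed t ht)
        (fun t ht => flipF_flipF (hbicol t ht)) (fun t ht => flipF_flipF (hbicol t ht))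
        (fun t ht => ?_)
      show I t = - I (flipF P t)
      rw [hflip t (flipF P t) (flip_flipF (hbicol t ht)), neg_neg]
    rw [Finset.sum_neg_distrib] at hneg
    linear_combination hneg / 2
  rw [← hmain, hS, Finset.sum_biUnion]
  · apply Finset.sum_congr rfl
    intro π hπ
    rw [List.sum_toFinset I (nodup_planeTrees _)]
  · intro π hπ π' hπ' hne
    simp only [Function.onFun]
    rw [Finset.disjoint_left]
    intro t ht ht'
    rw [List.mem_toFinset, mem_planeTrees] at ht ht'
    rw [ht] at ht'
    exact hne (shuffleWord_injective ht')
end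

section
/- Let M be a complex manifold and N a linear operator on the graded algebra A*_M of smooth forms, acting by a scalar N_α on each homogeneous degree, and satisfying N_{α₁∘α₂} = N_{α₁} + N_{α₂}. Define a product ∘ on A*_M[−1] by N(α₁ ∘ … ∘ α_m) := ∑_{i} (−1)^{ᾱᵢ(ᾱ₁+…+ᾱ_{i−1})} N(αᵢ) ∧ d^C α₁ ∧ … ∧ (omit N(αᵢ) slot) … ∧ d^C α_m, where ᾱ denotes degree in A*_M[−1]. Then: (i) d^C(α₁ ∘ … ∘ α_m) = d^C α₁ ∧ … ∧ d^C α_m; (ii) ∘ is graded commutative and associative. -/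
/-- The binary case of the product (3.30.ups.3) on `A*_M[−1]`:
`α₁ ∘ α₂ := N⁻¹(N α₁ ∧ d^C α₂ + (−1)^{ᾱ₁ᾱ₂} N α₂ ∧ d^C α₁)`, where `N` acts on a
homogeneous form of degree `s` by the scalar `ν s`, and `ᾱ = |α| − 1` is the shifted
degree. -/
noncomputable def prodC {A : Type*} [Ring A] [Algebra ℚ A]
    (dC : A →ₗ[ℚ] A) (ν : ℤ → ℚ) (s t : ℤ) (x y : A) : A :=
  (ν (s + t - 1))⁻¹ • (ν s • (x * dC y) +
    ((((Int.negOnePow ((s - 1) * (t - 1)) : ℤˣ) : ℤ) : ℚ) * ν t) • (y * dC x))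

lemma negOnePowQ_eq (m n k : ℤ) (h : m = n + 2*k) :
    ((((Int.negOnePow m : ℤˣ) : ℤ)) : ℚ) = ((((Int.negOnePow n : ℤˣ) : ℤ)) : ℚ) := by
  subst h; rw [Int.negOnePow_add, Int.negOnePow_two_mul, mul_one]

lemma negOnePowQ_add (m n : ℤ) :
    ((((Int.negOnePow (m+n) : ℤˣ) : ℤ)) : ℚ)
      = ((((Int.negOnePow m : ℤˣ) : ℤ)) : ℚ) * ((((Int.negOnePow n : ℤˣ) : ℤ)) : ℚ) := by
  rw [Int.negOnePow_add]; push_cast; ring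


theorem part1 {A : Type*} [Ring A] [Algebra ℚ A]
    (homog : ℤ → Submodule ℚ A)
    (hcomm : ∀ (i j : ℤ) (x y : A), x ∈ homog i → y ∈ homog j →
      x * y = (((Int.negOnePow (i * j) : ℤˣ) : ℤ)) • (y * x))
    (dC : A →ₗ[ℚ] A)
    (hd2 : ∀ x, dC (dC x) = 0)
    (hdeg : ∀ (i : ℤ) (x : A), x ∈ homog i → dC x ∈ homog (i + 1))
    (hleib : ∀ (i : ℤ) (x y : A), x ∈ homog i →
      dC (x * y) = dC x * y + (((Int.negOnePow i : ℤˣ) : ℤ)) • (x * dC y))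
    (ν : ℤ → ℚ) (hν : ∀ s t : ℤ, ν (s + t - 1) = ν s + ν t)
    (a b : A) (s t : ℤ)
    (ha : a ∈ homog s) (hb : b ∈ homog t)
    (hst : ν (s + t - 1) ≠ 0) :
    dC (prodC dC ν s t a b) = dC a * dC b := by
  have key : ∀ (i : ℤ) (x y : A), x ∈ homog i → dC (x * dC y) = dC x * dC y := by
    intro i x y hx
    rw [hleib i x (dC y) hx, hd2, mul_zero, smul_zero, add_zero]
  unfold prodC
  rw [map_smul, map_add, map_smul, map_smul, key s a b ha, key t b a hb,
    hcomm (t+1) (s+1) (dC b) (dC a) (hdeg _ _ hb) (hdeg _ _ ha),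
    ← Int.cast_smul_eq_zsmul ℚ,
    negOnePowQ_eq ((t+1)*(s+1)) ((s-1)*(t-1)) (s+t) (by ring)]
  rcases Int.units_eq_one_or (Int.negOnePow ((s-1)*(t-1))) with h | h <;>
    rw [h] <;> push_cast <;> match_scalars <;> field_simp <;> rw [hν] <;> ring

set_option maxHeartbeats 1600000 in
theorem part3 {A : Type*} [Ring A] [Algebra ℚ A]
    (homog : ℤ → Submodule ℚ A)
    (hcomm : ∀ (i j : ℤ) (x y : A), x ∈ homog i → y ∈ homog j →
      x * y = (((Int.negOnePow (i * j) : ℤˣ) : ℤ)) • (y * x))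
    (dC : A →ₗ[ℚ] A)
    (hd2 : ∀ x, dC (dC x) = 0)
    (hdeg : ∀ (i : ℤ) (x : A), x ∈ homog i → dC x ∈ homog (i + 1))
    (hleib : ∀ (i : ℤ) (x y : A), x ∈ homog i →
      dC (x * y) = dC x * y + (((Int.negOnePow i : ℤˣ) : ℤ)) • (x * dC y))
    (ν : ℤ → ℚ) (hν : ∀ s t : ℤ, ν (s + t - 1) = ν s + ν t)
    (a b c : A) (s t u : ℤ)
    (ha : a ∈ homog s) (hb : b ∈ homog t) (hc : c ∈ homog u)
    (hst : ν (s + t - 1) ≠ 0) (htu : ν (t + u - 1) ≠ 0) (hstu : ν (s + t + u - 2) ≠ 0) :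
    prodC dC ν (s + t - 1) u (prodC dC ν s t a b) c
      = prodC dC ν s (t + u - 1) a (prodC dC ν t u b c) := by
  have p1ab := part1 homog hcomm dC hd2 hdeg hleib ν hν a b s t ha hb hst
  have p1bc := part1 homog hcomm dC hd2 hdeg hleib ν hν b c t u hb hc htu
  have hca : dC c * dC a
      = ((((Int.negOnePow ((s-1)*(u-1)) : ℤˣ) : ℤ)) : ℚ) • (dC a * dC c) := by
    rw [hcomm (u+1) (s+1) (dC c) (dC a) (hdeg _ _ hc) (hdeg _ _ ha),
      ← Int.cast_smul_eq_zsmul ℚ, negOnePowQ_eq ((u+1)*(s+1)) ((s-1)*(u-1)) (s+u) (by ring)]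
  have hba : dC b * dC a
      = ((((Int.negOnePow ((s-1)*(t-1)) : ℤˣ) : ℤ)) : ℚ) • (dC a * dC b) := by
    rw [hcomm (t+1) (s+1) (dC b) (dC a) (hdeg _ _ hb) (hdeg _ _ ha),
      ← Int.cast_smul_eq_zsmul ℚ, negOnePowQ_eq ((t+1)*(s+1)) ((s-1)*(t-1)) (s+t) (by ring)]
  have hν3 : ν (s + t + u - 2) = ν s + ν t + ν u := by
    have h := hν (s+t-1) u
    rw [show s+t-1+u-1 = s+t+u-2 by ring] at h
    rw [h, hν]
  have hst' : ν s + ν t ≠ 0 := by rwa [← hν]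
  have htu' : ν t + ν u ≠ 0 := by rwa [← hν]
  have hstu' : ν s + ν t + ν u ≠ 0 := by rwa [← hν3]
  unfold prodC
  rw [show s+t-1+u-1 = s+t+u-2 by ring, show s+(t+u-1)-1 = s+t+u-2 by ring,
    negOnePowQ_eq ((s+t-1-1)*(u-1)) ((s-1)*(u-1)+(t-1)*(u-1)) 0 (by ring),
    negOnePowQ_eq ((s-1)*(t+u-1-1)) ((s-1)*(t-1)+(s-1)*(u-1)) 0 (by ring),
    negOnePowQ_add, negOnePowQ_add,
    map_smul, map_smul, map_add, map_add, map_smul, map_smul, map_smul, map_smul]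
  have key : ∀ (i : ℤ) (x y : A), x ∈ homog i → dC (x * dC y) = dC x * dC y := by
    intro i x y hx
    rw [hleib i x (dC y) hx, hd2, mul_zero, smul_zero, add_zero]
  rw [key s a b ha, key t b a hb, key t b c hb, key u c b hc, hba,
    hcomm (u+1) (t+1) (dC c) (dC b) (hdeg _ _ hc) (hdeg _ _ hb),
    ← Int.cast_smul_eq_zsmul ℚ, negOnePowQ_eq ((u+1)*(t+1)) ((t-1)*(u-1)) (t+u) (by ring)]
  simp only [smul_add, smul_smul, mul_assoc, smul_mul_assoc, mul_smul_comm, mul_add, add_mul]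
  rw [hca, hba]
  simp only [smul_add, smul_smul, mul_assoc, smul_mul_assoc, mul_smul_comm]
  rw [hν s t, hν t u, hν3]
  rcases Int.units_eq_one_or (Int.negOnePow ((s-1)*(t-1))) with h1 | h1 <;>
  rcases Int.units_eq_one_or (Int.negOnePow ((t-1)*(u-1))) with h2 | h2 <;>
  rcases Int.units_eq_one_or (Int.negOnePow ((s-1)*(u-1))) with h3 | h3 <;>
  rw [h1, h2, h3]
  all_goals push_cast
  all_goals match_scalars
  all_goals field_simp
  all_goals ring

theorem part2 {A : Type*} [Ring A] [Algebra ℚ A]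
    (dC : A →ₗ[ℚ] A) (ν : ℤ → ℚ) (a b : A) (s t : ℤ) :
    prodC dC ν s t a b
      = ((((Int.negOnePow ((s - 1) * (t - 1)) : ℤˣ) : ℤ) : ℚ)) • prodC dC ν t s b a := by
  unfold prodC
  rw [show t+s-1 = s+t-1 by ring,
    negOnePowQ_eq ((t-1)*(s-1)) ((s-1)*(t-1)) 0 (by ring)]
  rcases Int.units_eq_one_or (Int.negOnePow ((s-1)*(t-1))) with h | h <;>
    rw [h] <;> push_cast <;> match_scalars <;> ring


/-- Let `M` be a complex manifold, `A` its graded-commutative algebra of smooth forms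
(abstracted: graded-commutative, with `d^C = ∂ − ∂̄` an odd derivation of square zero),
and `N` an operator acting by a scalar `ν s` on degree-`s` forms and additive for `∘`
(i.e. `ν(s + t − 1) = ν s + ν t`, the degree of `α∘β` being `|α| + |β| − 1`).
Then, on homogeneous forms of degrees where `N` is invertible:
(i) `d^C(α₁ ∘ α₂) = d^C α₁ ∧ d^C α₂`;
(ii) `∘` is graded commutative for the shifted degrees; and
(iii) `∘` is associative. -/
theorem stmt14 {A : Type*} [Ring A] [Algebra ℚ A]
    (homog : ℤ → Submodule ℚ A)
    (hcomm : ∀ (i j : ℤ) (x y : A), x ∈ homog i → y ∈ homog j →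
      x * y = (((Int.negOnePow (i * j) : ℤˣ) : ℤ)) • (y * x))
    (dC : A →ₗ[ℚ] A)
    (hd2 : ∀ x, dC (dC x) = 0)
    (hdeg : ∀ (i : ℤ) (x : A), x ∈ homog i → dC x ∈ homog (i + 1))
    (hleib : ∀ (i : ℤ) (x y : A), x ∈ homog i →
      dC (x * y) = dC x * y + (((Int.negOnePow i : ℤˣ) : ℤ)) • (x * dC y))
    (ν : ℤ → ℚ) (hν : ∀ s t : ℤ, ν (s + t - 1) = ν s + ν t)
    (a b c : A) (s t u : ℤ)
    (ha : a ∈ homog s) (hb : b ∈ homog t) (hc : c ∈ homog u)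
    (hst : ν (s + t - 1) ≠ 0) (htu : ν (t + u - 1) ≠ 0) (hstu : ν (s + t + u - 2) ≠ 0) :
    dC (prodC dC ν s t a b) = dC a * dC b ∧
    prodC dC ν s t a b
      = ((((Int.negOnePow ((s - 1) * (t - 1)) : ℤˣ) : ℤ) : ℚ)) • prodC dC ν t s b a ∧
    prodC dC ν (s + t - 1) u (prodC dC ν s t a b) c
      = prodC dC ν s (t + u - 1) a (prodC dC ν t u b c) :=
  ⟨part1 homog hcomm dC hd2 hdeg hleib ν hν a b s t ha hb hst,
   part2 dC ν a b s t,
   part3 homog hcomm dC hd2 hdeg hleib ν hν a b c s t u ha hb hc hst htu hstu⟩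
end
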